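/- Let g be differentiable on [a,b] with |g'(z)| ≤ M for all z in [a,b]. Then |∫_a^b g(z)dz − (b−a)(g(a)+g(b))/2| ≤ M(b−a)²/4 − (g(b)−g(a))²/(4M). -/

import Mathlib

lemma affine_int (p q u m v : ℝ) :
    (∫ z in p..q, (u + m * (z - v))) = u * (q - p) + m * ((q - v)^2 - (p - v)^2) / 2 := by
  have hF : ∀ z ∈ Set.uIcc p q,
      HasDerivAt (fun z => u * z + m * (z - v)^2 / 2) (u + m * (z - v)) z := by
    intro z _
    have h1 : HasDerivAt (fun z : ℝ => u * z) u z := by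
      simpa using (hasDerivAt_id z).const_mul u
    have h2 : HasDerivAt (fun z : ℝ => (z - v)^2) (2 * (z - v)) z := by
      simpa using ((hasDerivAt_id z).sub_const v).fun_pow 2
    have := h1.fun_add ((h2.const_mul (m / 2)))
    exact (this.congr_deriv (by ring)).congr_of_eventuallyEq
      (Filter.Eventually.of_forall fun w => by ring)
  rw [intervalIntegral.integral_eq_sub_of_hasDerivAt hF
      ((continuous_const.add (continuous_const.mul
        ((continuous_id.sub continuous_const)))).intervalIntegrable p q)]
  ring

/-- Classical Iyengar inequality (1938). -/
theorem iyengar_classical (a b M : ℝ) (g g' : ℝ → ℝ) (hab : a < b) (hM : 0 < M)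
    (hderiv : ∀ z ∈ Set.Icc a b, HasDerivAt g (g' z) z)
    (hbound : ∀ z ∈ Set.Icc a b, |g' z| ≤ M) :
    |(∫ z in a..b, g z) - (b - a) * (g a + g b) / 2| ≤
      M * (b - a) ^ 2 / 4 - (g b - g a) ^ 2 / (4 * M) := by
  set d := g b - g a with hd
  have hM' : M ≠ 0 := ne_of_gt hM
  have hcont : ContinuousOn g (Set.Icc a b) :=
    fun z hz => (hderiv z hz).continuousAt.continuousWithinAt
  have lip : ∀ x ∈ Set.Icc a b, ∀ y ∈ Set.Icc a b, |g y - g x| ≤ M * |y - x| := by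
    intro x hx y hy
    have := (convex_Icc a b).norm_image_sub_le_of_norm_hasDerivWithin_le
      (fun z hz => (hderiv z hz).hasDerivWithinAt)
      (fun z hz => by simpa [Real.norm_eq_abs] using hbound z hz) hx hy
    simpa [Real.norm_eq_abs] using this
  have hamem : a ∈ Set.Icc a b := ⟨le_refl a, le_of_lt hab⟩
  have hbmem : b ∈ Set.Icc a b := ⟨le_of_lt hab, le_refl b⟩
  have hdb : |d| ≤ M * (b - a) := by
    have := lip a hamem b hbmem
    rwa [abs_of_nonneg (by linarith : (0:ℝ) ≤ b - a)] at this
  have h1 : d ≤ M * (b - a) := le_trans (le_abs_self d) hdb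
  have h2 : -(M * (b - a)) ≤ d := le_trans (neg_le_neg hdb) (neg_abs_le d)
  have key1 : d / (2 * M) ≤ (b - a) / 2 := by
    rw [div_le_div_iff₀ (by positivity) (by positivity)]; nlinarith
  have key2 : -((b - a) / 2) ≤ d / (2 * M) := by
    rw [neg_le, ← neg_div, div_le_div_iff₀ (by positivity) (by positivity)]; nlinarith
  set c1 := (a + b) / 2 + d / (2 * M) with hc1
  set c2 := (a + b) / 2 - d / (2 * M) with hc2
  have hac1 : a ≤ c1 := by rw [hc1]; linarith
  have hc1b : c1 ≤ b := by rw [hc1]; linarith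
  have hac2 : a ≤ c2 := by rw [hc2]; linarith
  have hc2b : c2 ≤ b := by rw [hc2]; linarith
  have int_g : ∀ p q, a ≤ p → p ≤ q → q ≤ b → IntervalIntegrable g MeasureTheory.volume p q :=
    fun p q hp hpq hq =>
      (hcont.mono (Set.Icc_subset_Icc hp hq)).intervalIntegrable_of_Icc hpq
  have int_aff : ∀ p q u m v : ℝ,
      IntervalIntegrable (fun z => u + m * (z - v)) MeasureTheory.volume p q :=
    fun p q u m v => (continuous_const.add (continuous_const.mul
        ((continuous_id.sub continuous_const)))).intervalIntegrable p q
  -- Upper bound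
  have split1 : (∫ z in a..b, g z) = (∫ z in a..c1, g z) + (∫ z in c1..b, g z) :=
    (intervalIntegral.integral_add_adjacent_intervals
      (int_g a c1 le_rfl hac1 hc1b) (int_g c1 b hac1 hc1b le_rfl)).symm
  have up1 : (∫ z in a..c1, g z) ≤ ∫ z in a..c1, (g a + M * (z - a)) := by
    apply intervalIntegral.integral_mono_on hac1 (int_g a c1 le_rfl hac1 hc1b)
      (int_aff a c1 (g a) M a)
    intro z hz
    have hz' : z ∈ Set.Icc a b := ⟨hz.1, le_trans hz.2 hc1b⟩
    have := lip a hamem z hz'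
    rw [abs_of_nonneg (by linarith [hz.1] : (0:ℝ) ≤ z - a)] at this
    have := abs_le.mp this
    linarith [this.2]
  have up2 : (∫ z in c1..b, g z) ≤ ∫ z in c1..b, (g b + (-M) * (z - b)) := by
    apply intervalIntegral.integral_mono_on hc1b (int_g c1 b hac1 hc1b le_rfl)
      (int_aff c1 b (g b) (-M) b)
    intro z hz
    have hz' : z ∈ Set.Icc a b := ⟨le_trans hac1 hz.1, hz.2⟩
    have := lip b hbmem z hz'
    rw [abs_of_nonpos (by linarith [hz.2] : z - b ≤ 0)] at this
    have := abs_le.mp this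
    linarith [this.2]
  have e1 : (∫ z in a..c1, (g a + M * (z - a))) =
      g a * (c1 - a) + M * ((c1 - a)^2 - (a - a)^2) / 2 := affine_int a c1 (g a) M a
  have e2 : (∫ z in c1..b, (g b + (-M) * (z - b))) =
      g b * (b - c1) + (-M) * ((b - b)^2 - (c1 - b)^2) / 2 := affine_int c1 b (g b) (-M) b
  have alg1 : g a * (c1 - a) + M * ((c1 - a)^2 - (a - a)^2) / 2
      + (g b * (b - c1) + (-M) * ((b - b)^2 - (c1 - b)^2) / 2)
      = (b - a) * (g a + g b) / 2 + (M * (b - a) ^ 2 / 4 - d ^ 2 / (4 * M)) := by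
    rw [hc1, hd]; field_simp; ring
  -- Lower bound
  have split2 : (∫ z in a..b, g z) = (∫ z in a..c2, g z) + (∫ z in c2..b, g z) :=
    (intervalIntegral.integral_add_adjacent_intervals
      (int_g a c2 le_rfl hac2 hc2b) (int_g c2 b hac2 hc2b le_rfl)).symm
  have lo1 : (∫ z in a..c2, (g a + (-M) * (z - a))) ≤ ∫ z in a..c2, g z := by
    apply intervalIntegral.integral_mono_on hac2 (int_aff a c2 (g a) (-M) a)
      (int_g a c2 le_rfl hac2 hc2b)
    intro z hz
    have hz' : z ∈ Set.Icc a b := ⟨hz.1, le_trans hz.2 hc2b⟩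
    have := lip a hamem z hz'
    rw [abs_of_nonneg (by linarith [hz.1] : (0:ℝ) ≤ z - a)] at this
    have := abs_le.mp this
    linarith [this.1]
  have lo2 : (∫ z in c2..b, (g b + M * (z - b))) ≤ ∫ z in c2..b, g z := by
    apply intervalIntegral.integral_mono_on hc2b (int_aff c2 b (g b) M b)
      (int_g c2 b hac2 hc2b le_rfl)
    intro z hz
    have hz' : z ∈ Set.Icc a b := ⟨le_trans hac2 hz.1, hz.2⟩
    have := lip b hbmem z hz'
    rw [abs_of_nonpos (by linarith [hz.2] : z - b ≤ 0)] at this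
    have := abs_le.mp this
    linarith [this.1]
  have e3 : (∫ z in a..c2, (g a + (-M) * (z - a))) =
      g a * (c2 - a) + (-M) * ((c2 - a)^2 - (a - a)^2) / 2 := affine_int a c2 (g a) (-M) a
  have e4 : (∫ z in c2..b, (g b + M * (z - b))) =
      g b * (b - c2) + M * ((b - b)^2 - (c2 - b)^2) / 2 := affine_int c2 b (g b) M b
  have alg2 : g a * (c2 - a) + (-M) * ((c2 - a)^2 - (a - a)^2) / 2
      + (g b * (b - c2) + M * ((b - b)^2 - (c2 - b)^2) / 2)
      = (b - a) * (g a + g b) / 2 - (M * (b - a) ^ 2 / 4 - d ^ 2 / (4 * M)) := by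
    rw [hc2, hd]; field_simp; ring
  rw [abs_le]
  constructor
  · rw [split2]; linarith
  · rw [split1]; linarith
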